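/- Let V be a 6-dimensional real vector space, let γ be an alternating 2-form on V, and let W ⊆ V be a 4-dimensional subspace such that γ(w, w′) = 0 for all w, w′ ∈ W. Then γ ∧ γ ∧ γ = 0. -/

import Mathlib

/-- The wedge product of a real-valued alternating `k`-form and a real-valued
alternating `l`-form, as a real-valued alternating `(k+l)`-form. -/
noncomputable def wedge {V : Type*} [AddCommGroup V] [Module ℝ V] {k l : ℕ}
    (ω : V [⋀^Fin k]→ₗ[ℝ] ℝ) (η : V [⋀^Fin l]→ₗ[ℝ] ℝ) :
    V [⋀^Fin (k + l)]→ₗ[ℝ] ℝ :=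
  ((TensorProduct.lid ℝ ℝ).toLinearMap.compAlternatingMap
    (ω.domCoprod η)).domDomCongr finSumFinEquiv

/-- If every "shuffle split" of the arguments kills one of the two factors,
then the wedge product vanishes at that tuple of arguments. -/
lemma wedge_apply_eq_zero {V : Type*} [AddCommGroup V] [Module ℝ V] {k l : ℕ}
    (ω : V [⋀^Fin k]→ₗ[ℝ] ℝ) (η : V [⋀^Fin l]→ₗ[ℝ] ℝ) (x : Fin (k + l) → V)
    (h : ∀ σ : Equiv.Perm (Fin k ⊕ Fin l),
      ω (fun i => x (finSumFinEquiv (σ (Sum.inl i)))) = 0 ∨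
      η (fun i => x (finSumFinEquiv (σ (Sum.inr i)))) = 0) :
    wedge ω η x = 0 := by
  classical
  rw [wedge, AlternatingMap.domDomCongr_apply, LinearMap.compAlternatingMap_apply]
  have hc : (ω.domCoprod η) (x ∘ finSumFinEquiv)
      = ∑ σ : Equiv.Perm.ModSumCongr (Fin k) (Fin l),
          AlternatingMap.domCoprod.summand ω η σ (x ∘ finSumFinEquiv) := by
    rw [← MultilinearMap.sum_apply]
    rfl
  rw [hc, map_sum]
  refine Finset.sum_eq_zero fun σ _ => ?_
  induction σ using Quotient.inductionOn' with
  | h σ =>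
    rw [show (Quotient.mk'' σ : Equiv.Perm.ModSumCongr (Fin k) (Fin l)) = Quotient.mk'' σ from rfl]
    rw [AlternatingMap.domCoprod.summand_mk'', MultilinearMap.smul_apply,
      MultilinearMap.domDomCongr_apply, MultilinearMap.domCoprod_apply]
    rcases h σ with h0 | h0 <;>
      simp only [Function.comp_apply, AlternatingMap.coe_multilinearMap, h0,
        TensorProduct.zero_tmul, TensorProduct.tmul_zero, map_zero, smul_zero]

/-- A 2-form vanishing on pairs from `W` vanishes on tuples from `W`. -/
lemma two_form_zero {V : Type*} [AddCommGroup V] [Module ℝ V]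
    (γ : V [⋀^Fin 2]→ₗ[ℝ] ℝ) (W : Submodule ℝ V)
    (hiso : ∀ w ∈ W, ∀ w' ∈ W, γ ![w, w'] = 0)
    (p : Fin 2 → V) (h0 : p 0 ∈ W) (h1 : p 1 ∈ W) : γ p = 0 := by
  have hp : p = ![p 0, p 1] := by
    funext i; fin_cases i <;> rfl
  rw [hp]
  exact hiso _ h0 _ h1

/-- In `Fin 2`, two elements distinct from a third are equal. -/
lemma fin2_pigeonhole {s₀ s₁ s₂ : Fin 2} (h1 : s₁ ≠ s₀) (h2 : s₂ ≠ s₀) : s₁ = s₂ := by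
  omega

/-- The pointwise statement: the triple wedge vanishes at any tuple which,
via an injection into `Fin 4 ⊕ Fin 2`, has its "`inl` positions" inside `W`. -/
lemma main_step {V : Type*} [AddCommGroup V] [Module ℝ V]
    (γ : V [⋀^Fin 2]→ₗ[ℝ] ℝ) (W : Submodule ℝ V)
    (hiso : ∀ w ∈ W, ∀ w' ∈ W, γ ![w, w'] = 0)
    (x : Fin (2 + 2 + 2) → V) (v : Fin (2 + 2 + 2) → Fin 4 ⊕ Fin 2)
    (hv : Function.Injective v)
    (hx : ∀ i j, v i = Sum.inl j → x i ∈ W) :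
    wedge (wedge γ γ) γ x = 0 := by
  classical
  apply wedge_apply_eq_zero
  intro σ
  -- the combined injection
  set T : Fin (2 + 2) ⊕ Fin 2 → Fin 4 ⊕ Fin 2 := fun s => v (finSumFinEquiv (σ s)) with hT
  have hTinj : Function.Injective T :=
    hv.comp (finSumFinEquiv.injective.comp σ.injective)
  by_cases hb : ∀ j : Fin 2, ∃ t, T (Sum.inr j) = Sum.inl t
  · -- both γ-arguments lie in W
    right
    refine two_form_zero γ W hiso _ ?_ ?_
    · obtain ⟨t, ht⟩ := hb 0; exact hx _ t ht
    · obtain ⟨t, ht⟩ := hb 1; exact hx _ t ht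
  · push_neg at hb
    obtain ⟨j₀, hj₀⟩ := hb
    obtain ⟨s₀, hs₀⟩ : ∃ s₀, T (Sum.inr j₀) = Sum.inr s₀ := by
      rcases hT0 : T (Sum.inr j₀) with t | s
      · exact absurd hT0 (hj₀ t)
      · exact ⟨s, rfl⟩
    -- at most one of the four arguments of `wedge γ γ` is outside `W`
    have hbad : ∀ (j₁ j₂ : Fin (2 + 2)) (s₁ s₂ : Fin 2),
        T (Sum.inl j₁) = Sum.inr s₁ → T (Sum.inl j₂) = Sum.inr s₂ → j₁ = j₂ := by
      intro j₁ j₂ s₁ s₂ h1 h2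
      have hne1 : s₁ ≠ s₀ := by
        intro hss
        have : T (Sum.inl j₁) = T (Sum.inr j₀) := by rw [h1, hs₀, hss]
        exact Sum.inl_ne_inr (hTinj this)
      have hne2 : s₂ ≠ s₀ := by
        intro hss
        have : T (Sum.inl j₂) = T (Sum.inr j₀) := by rw [h2, hs₀, hss]
        exact Sum.inl_ne_inr (hTinj this)
      have hs12 : s₁ = s₂ := fin2_pigeonhole hne1 hne2
      have : T (Sum.inl j₁) = T (Sum.inl j₂) := by rw [h1, h2, hs12]
      exact Sum.inl_injective (hTinj this)
    left
    apply wedge_apply_eq_zero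
    intro σ'
    by_cases hp : ∀ j : Fin 2, ∃ t,
        T (Sum.inl (finSumFinEquiv (σ' (Sum.inl j)))) = Sum.inl t
    · left
      refine two_form_zero γ W hiso _ ?_ ?_
      · obtain ⟨t, ht⟩ := hp 0; exact hx _ t ht
      · obtain ⟨t, ht⟩ := hp 1; exact hx _ t ht
    · push_neg at hp
      obtain ⟨j₁, hj₁⟩ := hp
      obtain ⟨s₁, hs₁⟩ : ∃ s₁,
          T (Sum.inl (finSumFinEquiv (σ' (Sum.inl j₁)))) = Sum.inr s₁ := by
        rcases hT1 : T (Sum.inl (finSumFinEquiv (σ' (Sum.inl j₁)))) with t | s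
        · exact absurd hT1 (hj₁ t)
        · exact ⟨s, rfl⟩
      right
      refine two_form_zero γ W hiso _ ?_ ?_ <;>
      · first
        | (rcases hT2 : T (Sum.inl (finSumFinEquiv (σ' (Sum.inr 0)))) with t | s
           · exact hx _ t hT2
           · exfalso
             have := hbad _ _ _ _ hs₁ hT2
             have h' : σ' (Sum.inl j₁) = σ' (Sum.inr 0) :=
               finSumFinEquiv.injective this
             exact Sum.inl_ne_inr (σ'.injective h'))
        | (rcases hT2 : T (Sum.inl (finSumFinEquiv (σ' (Sum.inr 1)))) with t | s
           · exact hx _ t hT2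
           · exfalso
             have := hbad _ _ _ _ hs₁ hT2
             have h' : σ' (Sum.inl j₁) = σ' (Sum.inr 1) :=
               finSumFinEquiv.injective this
             exact Sum.inl_ne_inr (σ'.injective h'))

set_option maxRecDepth 10000 in
/-- An alternating 2-form `γ` on a 6-dimensional real vector space admitting a
4-dimensional totally isotropic subspace satisfies `γ ∧ γ ∧ γ = 0`. -/
theorem gamma_cube_eq_zero_of_isotropic
    (V : Type*) [AddCommGroup V] [Module ℝ V] [FiniteDimensional ℝ V]
    (hV : Module.finrank ℝ V = 6) (γ : V [⋀^Fin 2]→ₗ[ℝ] ℝ)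
    (W : Submodule ℝ V) (hW : Module.finrank ℝ W = 4)
    (hiso : ∀ w ∈ W, ∀ w' ∈ W, γ ![w, w'] = 0) :
    wedge (wedge γ γ) γ = 0 := by
  classical
  obtain ⟨U, hU⟩ := Submodule.exists_isCompl W
  have hU2 : Module.finrank ℝ U = 2 := by
    have := Submodule.finrank_add_eq_of_isCompl hU
    omega
  let bW : Module.Basis (Fin 4) ℝ W := Module.finBasisOfFinrankEq ℝ W hW
  let bU : Module.Basis (Fin 2) ℝ U := Module.finBasisOfFinrankEq ℝ U hU2
  let e : Module.Basis (Fin 4 ⊕ Fin 2) ℝ V :=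
    (bW.prod bU).map (Submodule.prodEquivOfIsCompl W U hU)
  have he : ∀ j : Fin 4, e (Sum.inl j) ∈ W := by
    intro j
    have : e (Sum.inl j) = (bW j : V) + ((0 : U) : V) := by
      simp [e, Module.Basis.prod_apply, Submodule.coe_prodEquivOfIsCompl']
    rw [this]
    simp only [Submodule.coe_zero, add_zero]
    exact (bW j).2
  refine Module.Basis.ext_alternating e fun v hv => ?_
  rw [AlternatingMap.zero_apply]
  refine main_step γ W hiso (fun i => e (v i)) v hv fun i j hj => ?_
  show e (v i) ∈ W
  rw [hj]
  exact he j
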